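/- Fix real numbers t0 < τ and 0 < x_min < x_max. For i = 1, 2, let ψ_i : [t0,τ] × [x_min,x_max] → ℝ be C⁴ and satisfy ∂_t ψ_i(t,x) + ∂_x ψ_i(t,x) = 0 for all (t,x), with zero initial datum ψ_i(t0, x) = 0 for all x ∈ [x_min,x_max], boundary datum ψ_i(t, x_min) = u_i(t) with u_i ∈ C³([t0,τ]), and ψ_i(t, x_max) = 0 for all t ∈ [t0,τ]. If the third-moment outputs agree, i.e., ∫_{x_min}^{x_max} x³ ψ_1(t,x) dx = ∫_{x_min}^{x_max} x³ ψ_2(t,x) dx for all t ∈ [t0,τ], then u_1 = u_2 on [t0,τ]. -/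

import Mathlib

set_option autoImplicit false

open Set MeasureTheory intervalIntegral


section Aux
variable {t0 τ xmin xmax : ℝ}

lemma aux_slice_t {ψ : ℝ → ℝ → ℝ}
    (hC : ContDiffOn ℝ 4 (fun p : ℝ × ℝ => ψ p.1 p.2) (Icc t0 τ ×ˢ Icc xmin xmax))
    {t x : ℝ} (htm : t ∈ Icc t0 τ) (hxm : x ∈ Icc xmin xmax) :
    HasDerivWithinAt (fun s => ψ s x)
      ((fderivWithin ℝ (fun p : ℝ × ℝ => ψ p.1 p.2) (Icc t0 τ ×ˢ Icc xmin xmax) (t, x)) (1, 0))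
      (Icc t0 τ) t := by
  have hdiff : DifferentiableWithinAt ℝ (fun p : ℝ × ℝ => ψ p.1 p.2)
      (Icc t0 τ ×ˢ Icc xmin xmax) (t, x) :=
    (hC.differentiableOn (by norm_num)) (t, x) (Set.mk_mem_prod htm hxm)
  have hF := hdiff.hasFDerivWithinAt
  have hι : HasDerivWithinAt (fun s : ℝ => (s, x)) ((1 : ℝ), (0 : ℝ)) (Icc t0 τ) t :=
    ((hasDerivAt_id t).prodMk (hasDerivAt_const t x)).hasDerivWithinAt
  have := hF.comp_hasDerivWithinAt t hι (fun s hs => Set.mk_mem_prod hs hxm)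
  exact this

lemma aux_slice_x {ψ : ℝ → ℝ → ℝ}
    (hC : ContDiffOn ℝ 4 (fun p : ℝ × ℝ => ψ p.1 p.2) (Icc t0 τ ×ˢ Icc xmin xmax))
    {t x : ℝ} (htm : t ∈ Icc t0 τ) (hxm : x ∈ Icc xmin xmax) :
    HasDerivWithinAt (fun ξ => ψ t ξ)
      ((fderivWithin ℝ (fun p : ℝ × ℝ => ψ p.1 p.2) (Icc t0 τ ×ˢ Icc xmin xmax) (t, x)) (0, 1))
      (Icc xmin xmax) x := by
  have hdiff : DifferentiableWithinAt ℝ (fun p : ℝ × ℝ => ψ p.1 p.2)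
      (Icc t0 τ ×ˢ Icc xmin xmax) (t, x) :=
    (hC.differentiableOn (by norm_num)) (t, x) (Set.mk_mem_prod htm hxm)
  have hF := hdiff.hasFDerivWithinAt
  have hι : HasDerivWithinAt (fun ξ : ℝ => (t, ξ)) ((0 : ℝ), (1 : ℝ)) (Icc xmin xmax) x :=
    ((hasDerivAt_const x t).prodMk (hasDerivAt_id x)).hasDerivWithinAt
  have := hF.comp_hasDerivWithinAt x hι (fun ξ hξ => Set.mk_mem_prod htm hξ)
  exact this

lemma aux_fderiv_cont (ht : t0 < τ) (hx : xmin < xmax) {ψ : ℝ → ℝ → ℝ}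
    (hC : ContDiffOn ℝ 4 (fun p : ℝ × ℝ => ψ p.1 p.2) (Icc t0 τ ×ˢ Icc xmin xmax)) (v : ℝ × ℝ) :
    ContinuousOn (fun p : ℝ × ℝ =>
      (fderivWithin ℝ (fun q : ℝ × ℝ => ψ q.1 q.2) (Icc t0 τ ×ˢ Icc xmin xmax) p) v)
      (Icc t0 τ ×ˢ Icc xmin xmax) := by
  have hu : UniqueDiffOn ℝ (Icc t0 τ ×ˢ Icc xmin xmax) :=
    (uniqueDiffOn_Icc ht).prod (uniqueDiffOn_Icc hx)
  have hcont := hC.continuousOn_fderivWithin hu (by norm_num)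
  exact (ContinuousLinearMap.apply ℝ ℝ v).continuous.comp_continuousOn hcont

lemma aux_primitive {a b : ℝ} {g : ℝ → ℝ} (hab : a < b) (hg : ContinuousOn g (Icc a b))
    {t : ℝ} (ht : t ∈ Icc a b) :
    HasDerivWithinAt (fun r => ∫ s in a..r, g s) (g t) (Icc a b) t := by
  have hmeasIcc : AEStronglyMeasurable g (volume.restrict (Icc a b)) :=
    hg.aestronglyMeasurable measurableSet_Icc
  have hint : IntervalIntegrable g volume a t :=
    (hg.mono (Icc_subset_Icc le_rfl ht.2)).intervalIntegrable_of_Icc ht.1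
  have hR : t < b → HasDerivWithinAt (fun r => ∫ s in a..r, g s) (g t) (Ici t) t := by
    intro htb
    have hmem : Icc a b ∈ nhdsWithin t (Ioi t) := by
      filter_upwards [inter_mem_nhdsWithin (Ioi t) (Iio_mem_nhds htb)] with s hs
      exact ⟨ht.1.trans hs.1.le, hs.2.le⟩
    have hmeas : StronglyMeasurableAtFilter g (nhdsWithin t (Ioi t)) :=
      ⟨Icc a b, hmem, hmeasIcc⟩
    have hcont : ContinuousWithinAt g (Ioi t) t :=
      (hg t ht).mono_of_mem_nhdsWithin hmem
    exact integral_hasDerivWithinAt_right hint hmeas hcont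
  have hL : a < t → HasDerivWithinAt (fun r => ∫ s in a..r, g s) (g t) (Iic t) t := by
    intro hat
    have hmem : Icc a b ∈ nhdsWithin t (Iic t) := by
      filter_upwards [inter_mem_nhdsWithin (Iic t) (Ioi_mem_nhds hat)] with s hs
      exact ⟨hs.2.le, hs.1.trans ht.2⟩
    have hmeas : StronglyMeasurableAtFilter g (nhdsWithin t (Iic t)) :=
      ⟨Icc a b, hmem, hmeasIcc⟩
    have hcont : ContinuousWithinAt g (Iic t) t :=
      (hg t ht).mono_of_mem_nhdsWithin hmem
    exact integral_hasDerivWithinAt_right hint hmeas hcont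
  rcases eq_or_lt_of_le ht.1 with h1 | h1
  · rcases eq_or_lt_of_le ht.2 with h2 | h2
    · exact absurd (h1.trans h2) hab.ne
    · exact (hR h2).mono (Icc_subset_Ici_self.trans (by rw [← h1]))
  · rcases eq_or_lt_of_le ht.2 with h2 | h2
    · exact (hL h1).mono (h2 ▸ Icc_subset_Iic_self)
    · exact ((hR h2).union (hL h1)).mono (by intro s _; simp [le_total t s])

lemma aux_ibp (hx : xmin < xmax)
    {ψ P Q : ℝ → ℝ → ℝ} {uu : ℝ → ℝ}
    (hψcont : ContinuousOn (fun p : ℝ × ℝ => ψ p.1 p.2) (Icc t0 τ ×ˢ Icc xmin xmax))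
    (hQcont : ContinuousOn (fun p : ℝ × ℝ => Q p.1 p.2) (Icc t0 τ ×ˢ Icc xmin xmax))
    (hQd : ∀ t ∈ Icc t0 τ, ∀ x ∈ Icc xmin xmax,
      HasDerivWithinAt (fun ξ => ψ t ξ) (Q t x) (Icc xmin xmax) x)
    (hPDE : ∀ t ∈ Icc t0 τ, ∀ x ∈ Icc xmin xmax, P t x + Q t x = 0)
    (hbmin : ∀ t ∈ Icc t0 τ, ψ t xmin = uu t)
    (hbmax : ∀ t ∈ Icc t0 τ, ψ t xmax = 0)
    (k : ℕ) {t : ℝ} (htm : t ∈ Icc t0 τ) :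
    (∫ x in xmin..xmax, x ^ k * P t x)
      = xmin ^ k * uu t + k * ∫ x in xmin..xmax, x ^ (k - 1) * ψ t x := by
  have hxle := hx.le
  have hψs : ContinuousOn (fun x => ψ t x) (Icc xmin xmax) := by
    have : ContinuousOn (fun x : ℝ => ((t, x) : ℝ × ℝ)) (Icc xmin xmax) :=
      (continuous_const.prodMk continuous_id).continuousOn
    exact hψcont.comp this (fun x hxm => Set.mk_mem_prod htm hxm)
  have hQs : ContinuousOn (fun x => Q t x) (Icc xmin xmax) := by
    have : ContinuousOn (fun x : ℝ => ((t, x) : ℝ × ℝ)) (Icc xmin xmax) :=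
      (continuous_const.prodMk continuous_id).continuousOn
    exact hQcont.comp this (fun x hxm => Set.mk_mem_prod htm hxm)
  have hcont : ContinuousOn (fun x => x ^ k * ψ t x) (Icc xmin xmax) :=
    (continuousOn_pow k).mul hψs
  have hderiv : ∀ x ∈ Ioo xmin xmax,
      HasDerivWithinAt (fun x => x ^ k * ψ t x)
        ((k : ℝ) * x ^ (k - 1) * ψ t x + x ^ k * Q t x) (Ioi x) x := by
    intro x hxm
    have hxI : x ∈ Icc xmin xmax := ⟨hxm.1.le, hxm.2.le⟩
    have hmem : Icc xmin xmax ∈ nhdsWithin x (Ioi x) := by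
      filter_upwards [inter_mem_nhdsWithin (Ioi x) (Iio_mem_nhds hxm.2)] with s hs
      exact ⟨hxm.1.le.trans hs.1.le, hs.2.le⟩
    have h1 : HasDerivWithinAt (fun x : ℝ => x ^ k) ((k : ℝ) * x ^ (k - 1)) (Ioi x) x :=
      (hasDerivAt_pow k x).hasDerivWithinAt
    have h2 : HasDerivWithinAt (fun ξ => ψ t ξ) (Q t x) (Ioi x) x :=
      (hQd t htm x hxI).mono_of_mem_nhdsWithin hmem
    exact h1.mul h2
  have hintg : IntervalIntegrable
      (fun x => (k : ℝ) * x ^ (k - 1) * ψ t x + x ^ k * Q t x) volume xmin xmax := by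
    apply ContinuousOn.intervalIntegrable_of_Icc hxle
    exact ((continuous_const.continuousOn.mul (continuousOn_pow (k-1))).mul hψs).add
      ((continuousOn_pow k).mul hQs)
  have hFTC := integral_eq_sub_of_hasDeriv_right_of_le hxle hcont hderiv hintg
  rw [hbmax t htm, hbmin t htm, mul_zero, zero_sub] at hFTC
  have hi1 : IntervalIntegrable (fun x => (k:ℝ) * x ^ (k - 1) * ψ t x) volume xmin xmax :=
    ContinuousOn.intervalIntegrable_of_Icc hxle
      ((continuous_const.continuousOn.mul (continuousOn_pow (k-1))).mul hψs)
  have hi2 : IntervalIntegrable (fun x => x ^ k * Q t x) volume xmin xmax :=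
    ContinuousOn.intervalIntegrable_of_Icc hxle ((continuousOn_pow k).mul hQs)
  rw [integral_add hi1 hi2] at hFTC
  have hPQ : (∫ x in xmin..xmax, x ^ k * P t x) = -∫ x in xmin..xmax, x ^ k * Q t x := by
    rw [← intervalIntegral.integral_neg]
    apply integral_congr
    intro x hxm
    rw [uIcc_of_le hxle] at hxm
    have := hPDE t htm x hxm
    have hPx : P t x = -Q t x := by linarith
    show x ^ k * P t x = -(x ^ k * Q t x)
    rw [hPx]; ring
  rw [hPQ]
  have hck : (∫ x in xmin..xmax, (k:ℝ) * x ^ (k - 1) * ψ t x)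
      = k * ∫ x in xmin..xmax, x ^ (k-1) * ψ t x := by
    rw [← intervalIntegral.integral_const_mul]
    congr 1
    funext x
    ring
  rw [hck] at hFTC
  linarith [hFTC]

lemma aux_rep (hx : xmin < xmax)
    {ψ P : ℝ → ℝ → ℝ}
    (hψcont : ContinuousOn (fun p : ℝ × ℝ => ψ p.1 p.2) (Icc t0 τ ×ˢ Icc xmin xmax))
    (hPcont : ContinuousOn (fun p : ℝ × ℝ => P p.1 p.2) (Icc t0 τ ×ˢ Icc xmin xmax))
    (hPd : ∀ x ∈ Icc xmin xmax, ∀ t ∈ Icc t0 τ,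
      HasDerivWithinAt (fun s => ψ s x) (P t x) (Icc t0 τ) t)
    (hinit : ∀ x ∈ Icc xmin xmax, ψ t0 x = 0)
    (k : ℕ) {t : ℝ} (htm : t ∈ Icc t0 τ) :
    (∫ x in xmin..xmax, x ^ k * ψ t x)
      = ∫ s in t0..t, (∫ x in xmin..xmax, x ^ k * P s x) := by
  have hxle := hx.le
  have htle : t0 ≤ t := htm.1
  have hsub : Icc t0 t ⊆ Icc t0 τ := Icc_subset_Icc le_rfl htm.2
  have h1 : ∀ x ∈ Icc xmin xmax, (∫ s in t0..t, P s x) = ψ t x - ψ t0 x := by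
    intro x hxm
    have hψs : ContinuousOn (fun s => ψ s x) (Icc t0 t) := by
      have hmap : ContinuousOn (fun s : ℝ => ((s, x) : ℝ × ℝ)) (Icc t0 t) :=
        (continuous_id.prodMk continuous_const).continuousOn
      exact hψcont.comp hmap (fun s hs => Set.mk_mem_prod (hsub hs) hxm)
    have hPs : ContinuousOn (fun s => P s x) (Icc t0 t) := by
      have hmap : ContinuousOn (fun s : ℝ => ((s, x) : ℝ × ℝ)) (Icc t0 t) :=
        (continuous_id.prodMk continuous_const).continuousOn
      exact hPcont.comp hmap (fun s hs => Set.mk_mem_prod (hsub hs) hxm)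
    have hderiv : ∀ s ∈ Ioo t0 t, HasDerivWithinAt (fun s => ψ s x) (P s x) (Ioi s) s := by
      intro s hs
      have hsm : s ∈ Icc t0 τ := hsub ⟨hs.1.le, hs.2.le⟩
      have hmem : Icc t0 τ ∈ nhdsWithin s (Ioi s) := by
        filter_upwards [inter_mem_nhdsWithin (Ioi s) (Iio_mem_nhds (hs.2.trans_le htm.2))]
          with r hr
        exact ⟨hsm.1.trans hr.1.le, hr.2.le⟩
      exact (hPd x hxm s hsm).mono_of_mem_nhdsWithin hmem
    exact integral_eq_sub_of_hasDeriv_right_of_le htle hψs hderiv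
      (hPs.intervalIntegrable_of_Icc htle)
  have h2 : (∫ x in xmin..xmax, x ^ k * ψ t x)
      = ∫ x in xmin..xmax, (∫ s in t0..t, x ^ k * P s x) := by
    apply integral_congr
    intro x hxm
    rw [uIcc_of_le hxle] at hxm
    show x ^ k * ψ t x = ∫ s in t0..t, x ^ k * P s x
    rw [intervalIntegral.integral_const_mul, h1 x hxm, hinit x hxm]
    ring
  rw [h2]
  have hIcc : IntegrableOn (fun q : ℝ × ℝ => q.1 ^ k * P q.2 q.1)
      (Icc xmin xmax ×ˢ Icc t0 t) volume := by
    apply ContinuousOn.integrableOn_compact (isCompact_Icc.prod isCompact_Icc)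
    have hswap : ContinuousOn (fun q : ℝ × ℝ => ((q.2, q.1) : ℝ × ℝ))
        (Icc xmin xmax ×ˢ Icc t0 t) := (continuous_snd.prodMk continuous_fst).continuousOn
    have := hPcont.comp hswap
      (fun q hq => Set.mk_mem_prod (hsub hq.2) hq.1)
    exact ((continuous_fst.pow k).continuousOn).mul this
  have hint : Integrable (Function.uncurry (fun x s => x ^ k * P s x))
      ((volume.restrict (Ioc xmin xmax)).prod (volume.restrict (Ioc t0 t))) := by
    rw [Measure.prod_restrict]
    exact (hIcc.mono_set (Set.prod_mono Ioc_subset_Icc_self Ioc_subset_Icc_self))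
  have hswap := MeasureTheory.integral_integral_swap hint
  rw [intervalIntegral.integral_of_le hxle, intervalIntegral.integral_of_le htle]
  simp only [intervalIntegral.integral_of_le htle, intervalIntegral.integral_of_le hxle] at *
  exact hswap

lemma aux_ode (c0 c1 c2 : ℝ) {m0 m1 m2 : ℝ → ℝ}
    (hc0 : ContinuousOn m0 (Icc t0 τ)) (hc1 : ContinuousOn m1 (Icc t0 τ))
    (hc2 : ContinuousOn m2 (Icc t0 τ))
    (h0 : ∀ t ∈ Icc t0 τ, HasDerivWithinAt m0 (c0 * m2 t) (Icc t0 τ) t)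
    (h1 : ∀ t ∈ Icc t0 τ, HasDerivWithinAt m1 (m0 t + c1 * m2 t) (Icc t0 τ) t)
    (h2 : ∀ t ∈ Icc t0 τ, HasDerivWithinAt m2 (2 * m1 t + c2 * m2 t) (Icc t0 τ) t)
    (hz0 : m0 t0 = 0) (hz1 : m1 t0 = 0) (hz2 : m2 t0 = 0) :
    ∀ t ∈ Icc t0 τ, m0 t = 0 ∧ m1 t = 0 ∧ m2 t = 0 := by
  set E := ℝ × ℝ × ℝ
  let p0 : E →L[ℝ] ℝ := ContinuousLinearMap.fst ℝ ℝ (ℝ × ℝ)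
  let p1 : E →L[ℝ] ℝ :=
    (ContinuousLinearMap.fst ℝ ℝ ℝ).comp (ContinuousLinearMap.snd ℝ ℝ (ℝ × ℝ))
  let p2 : E →L[ℝ] ℝ :=
    (ContinuousLinearMap.snd ℝ ℝ ℝ).comp (ContinuousLinearMap.snd ℝ ℝ (ℝ × ℝ))
  let A : E →L[ℝ] E := (c0 • p2).prod ((p0 + c1 • p2).prod ((2 : ℝ) • p1 + c2 • p2))
  have hA : ∀ p : E, A p = (c0 * p.2.2, p.1 + c1 * p.2.2, 2 * p.2.1 + c2 * p.2.2) := by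
    intro p
    rfl
  let V : ℝ → E := fun t => (m0 t, m1 t, m2 t)
  have key : EqOn V (fun _ => (0 : E)) (Icc t0 τ) := by
    apply ODE_solution_unique_of_mem_Icc_right
      (v := fun _ p => A p) (s := fun _ => (univ : Set E)) (K := ‖A‖₊)
      (fun t _ => A.lipschitz.lipschitzOnWith)
    · exact (hc0.prodMk (hc1.prodMk hc2))
    · intro t htm
      have htmem : t ∈ Icc t0 τ := ⟨htm.1, htm.2.le⟩
      have hmono : Icc t0 τ ∈ nhdsWithin t (Ici t) := by
        filter_upwards [inter_mem_nhdsWithin (Ici t) (Iio_mem_nhds htm.2)] with s hs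
        exact ⟨htm.1.trans hs.1, hs.2.le⟩
      have := (((h0 t htmem).prodMk ((h1 t htmem).prodMk (h2 t htmem))).mono_of_mem_nhdsWithin hmono)
      rw [hA]
      exact this
    · exact fun _ _ => trivial
    · exact continuousOn_const
    · intro t htm
      have : A (0 : E) = 0 := map_zero A
      rw [this]
      exact (hasDerivWithinAt_const _ _ _)
    · exact fun _ _ => trivial
    · simp [V, hz0, hz1, hz2]; rfl
  intro t htm
  have h' : (m0 t, m1 t, m2 t) = ((0:ℝ), (0:ℝ), (0:ℝ)) := key htm
  exact ⟨congrArg Prod.fst h', congrArg Prod.fst (congrArg Prod.snd h'),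
    congrArg Prod.snd (congrArg Prod.snd h')⟩


lemma aux_main {t0 τ xmin xmax : ℝ} (ht : t0 < τ) (hx0 : 0 < xmin) (hx : xmin < xmax)
    {ψ P Q : ℝ → ℝ → ℝ} {u : ℝ → ℝ}
    (hψcont : ContinuousOn (fun p : ℝ × ℝ => ψ p.1 p.2) (Icc t0 τ ×ˢ Icc xmin xmax))
    (hPcont : ContinuousOn (fun p : ℝ × ℝ => P p.1 p.2) (Icc t0 τ ×ˢ Icc xmin xmax))
    (hQcont : ContinuousOn (fun p : ℝ × ℝ => Q p.1 p.2) (Icc t0 τ ×ˢ Icc xmin xmax))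
    (hPd : ∀ x ∈ Icc xmin xmax, ∀ t ∈ Icc t0 τ,
      HasDerivWithinAt (fun s => ψ s x) (P t x) (Icc t0 τ) t)
    (hQd : ∀ t ∈ Icc t0 τ, ∀ x ∈ Icc xmin xmax,
      HasDerivWithinAt (fun ξ => ψ t ξ) (Q t x) (Icc xmin xmax) x)
    (hPDE : ∀ t ∈ Icc t0 τ, ∀ x ∈ Icc xmin xmax, P t x + Q t x = 0)
    (hucont : ContinuousOn u (Icc t0 τ))
    (hinit : ∀ x ∈ Icc xmin xmax, ψ t0 x = 0)
    (hbmin : ∀ t ∈ Icc t0 τ, ψ t xmin = u t)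
    (hbmax : ∀ t ∈ Icc t0 τ, ψ t xmax = 0)
    (hm3 : ∀ t ∈ Icc t0 τ, (∫ x in xmin..xmax, x ^ 3 * ψ t x) = 0) :
    ∀ t ∈ Icc t0 τ, u t = 0 := by
  have hxne : xmin ≠ 0 := hx0.ne'
  -- general representation formula
  have hrep : ∀ k : ℕ, ∀ t ∈ Icc t0 τ, (∫ x in xmin..xmax, x ^ k * ψ t x)
      = ∫ s in t0..t, (xmin ^ k * u s + k * ∫ x in xmin..xmax, x ^ (k-1) * ψ s x) := by
    intro k t htm
    rw [aux_rep hx hψcont hPcont hPd hinit k htm]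
    apply integral_congr
    intro s hs
    rw [uIcc_of_le htm.1] at hs
    have hsm : s ∈ Icc t0 τ := ⟨hs.1, hs.2.trans htm.2⟩
    exact aux_ibp hx hψcont hQcont hQd hPDE hbmin hbmax k hsm
  -- clean representations for k = 0,1,2,3
  have R0 : ∀ t ∈ Icc t0 τ, (∫ x in xmin..xmax, x ^ 0 * ψ t x) = ∫ s in t0..t, u s := by
    intro t htm
    rw [hrep 0 t htm]
    apply integral_congr
    intro s _
    show xmin ^ 0 * u s + ((0:ℕ):ℝ) * _ = u s
    norm_num
  have R1 : ∀ t ∈ Icc t0 τ, (∫ x in xmin..xmax, x ^ 1 * ψ t x)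
      = ∫ s in t0..t, (xmin * u s + ∫ x in xmin..xmax, x ^ 0 * ψ s x) := by
    intro t htm
    rw [hrep 1 t htm]
    apply integral_congr
    intro s _
    show xmin ^ 1 * u s + ((1:ℕ):ℝ) * (∫ x in xmin..xmax, x ^ (1-1) * ψ s x)
      = xmin * u s + ∫ x in xmin..xmax, x ^ 0 * ψ s x
    norm_num
  have R2 : ∀ t ∈ Icc t0 τ, (∫ x in xmin..xmax, x ^ 2 * ψ t x)
      = ∫ s in t0..t, (xmin ^ 2 * u s + 2 * ∫ x in xmin..xmax, x ^ 1 * ψ s x) := by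
    intro t htm
    rw [hrep 2 t htm]
    apply integral_congr
    intro s _
    show xmin ^ 2 * u s + ((2:ℕ):ℝ) * (∫ x in xmin..xmax, x ^ (2-1) * ψ s x)
      = xmin ^ 2 * u s + 2 * ∫ x in xmin..xmax, x ^ 1 * ψ s x
    norm_num
  have R3 : ∀ t ∈ Icc t0 τ, (∫ x in xmin..xmax, x ^ 3 * ψ t x)
      = ∫ s in t0..t, (xmin ^ 3 * u s + 3 * ∫ x in xmin..xmax, x ^ 2 * ψ s x) := by
    intro t htm
    rw [hrep 3 t htm]
    apply integral_congr
    intro s _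
    show xmin ^ 3 * u s + ((3:ℕ):ℝ) * (∫ x in xmin..xmax, x ^ (3-1) * ψ s x)
      = xmin ^ 3 * u s + 3 * ∫ x in xmin..xmax, x ^ 2 * ψ s x
    norm_num
  -- derivatives and continuity of the moments
  have hd0 : ∀ t ∈ Icc t0 τ,
      HasDerivWithinAt (fun r => ∫ x in xmin..xmax, x ^ 0 * ψ r x) (u t) (Icc t0 τ) t :=
    fun t htm => (aux_primitive ht hucont htm).congr (fun s hs => R0 s hs) (R0 t htm)
  have hc0 : ContinuousOn (fun r => ∫ x in xmin..xmax, x ^ 0 * ψ r x) (Icc t0 τ) :=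
    fun t htm => (hd0 t htm).continuousWithinAt
  have hg1cont : ContinuousOn
      (fun s => xmin * u s + ∫ x in xmin..xmax, x ^ 0 * ψ s x) (Icc t0 τ) :=
    (continuousOn_const.mul hucont).add hc0
  have hd1 : ∀ t ∈ Icc t0 τ,
      HasDerivWithinAt (fun r => ∫ x in xmin..xmax, x ^ 1 * ψ r x)
        (xmin * u t + ∫ x in xmin..xmax, x ^ 0 * ψ t x) (Icc t0 τ) t :=
    fun t htm => (aux_primitive ht hg1cont htm).congr (fun s hs => R1 s hs) (R1 t htm)
  have hc1 : ContinuousOn (fun r => ∫ x in xmin..xmax, x ^ 1 * ψ r x) (Icc t0 τ) :=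
    fun t htm => (hd1 t htm).continuousWithinAt
  have hg2cont : ContinuousOn
      (fun s => xmin ^ 2 * u s + 2 * ∫ x in xmin..xmax, x ^ 1 * ψ s x) (Icc t0 τ) :=
    (continuousOn_const.mul hucont).add (continuousOn_const.mul hc1)
  have hd2 : ∀ t ∈ Icc t0 τ,
      HasDerivWithinAt (fun r => ∫ x in xmin..xmax, x ^ 2 * ψ r x)
        (xmin ^ 2 * u t + 2 * ∫ x in xmin..xmax, x ^ 1 * ψ t x) (Icc t0 τ) t :=
    fun t htm => (aux_primitive ht hg2cont htm).congr (fun s hs => R2 s hs) (R2 t htm)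
  have hc2 : ContinuousOn (fun r => ∫ x in xmin..xmax, x ^ 2 * ψ r x) (Icc t0 τ) :=
    fun t htm => (hd2 t htm).continuousWithinAt
  have hg3cont : ContinuousOn
      (fun s => xmin ^ 3 * u s + 3 * ∫ x in xmin..xmax, x ^ 2 * ψ s x) (Icc t0 τ) :=
    (continuousOn_const.mul hucont).add (continuousOn_const.mul hc2)
  have hd3 : ∀ t ∈ Icc t0 τ,
      HasDerivWithinAt (fun r => ∫ x in xmin..xmax, x ^ 3 * ψ r x)
        (xmin ^ 3 * u t + 3 * ∫ x in xmin..xmax, x ^ 2 * ψ t x) (Icc t0 τ) t :=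
    fun t htm => (aux_primitive ht hg3cont htm).congr (fun s hs => R3 s hs) (R3 t htm)
  -- from the vanishing third moment: xmin^3 * u t + 3 * M2 t = 0 on Icc
  have hueq : ∀ t ∈ Icc t0 τ,
      xmin ^ 3 * u t + 3 * (∫ x in xmin..xmax, x ^ 2 * ψ t x) = 0 := by
    intro t htm
    have hzero : HasDerivWithinAt (fun r => ∫ x in xmin..xmax, x ^ 3 * ψ r x)
        0 (Icc t0 τ) t :=
      (hasDerivWithinAt_const t _ (0:ℝ)).congr (fun s hs => hm3 s hs) (hm3 t htm)
    have hud : UniqueDiffWithinAt ℝ (Icc t0 τ) t := (uniqueDiffOn_Icc ht) t htm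
    have e1 := (hd3 t htm).derivWithin hud
    have e2 := hzero.derivWithin hud
    rw [e2] at e1
    linarith [e1]
  have hut : ∀ t ∈ Icc t0 τ,
      u t = (-3) / xmin ^ 3 * (∫ x in xmin..xmax, x ^ 2 * ψ t x) := by
    intro t htm
    have h := hueq t htm
    have hp : xmin ^ 3 ≠ 0 := pow_ne_zero 3 hxne
    field_simp
    linarith [h]
  -- initial conditions
  have hz : ∀ k : ℕ, (∫ x in xmin..xmax, x ^ k * ψ t0 x) = 0 := by
    intro k
    have : (∫ x in xmin..xmax, x ^ k * ψ t0 x) = ∫ x in xmin..xmax, (0:ℝ) := by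
      apply integral_congr
      intro x hxm
      rw [uIcc_of_le hx.le] at hxm
      show x ^ k * ψ t0 x = 0
      rw [hinit x hxm, mul_zero]
    rw [this]
    simp
  -- the closed linear ODE system
  have hode := aux_ode (t0 := t0) (τ := τ) ((-3)/xmin^3) ((-3)/xmin^2) ((-3)/xmin)
    hc0 hc1 hc2 ?_ ?_ ?_ (hz 0) (hz 1) (hz 2)
  · intro t htm
    have := (hode t htm).2.2
    rw [hut t htm, this, mul_zero]
  · intro t htm
    have h := hd0 t htm
    rwa [hut t htm] at h
  · intro t htm
    have h := hd1 t htm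
    have e : xmin * u t + (∫ x in xmin..xmax, x ^ 0 * ψ t x)
        = (∫ x in xmin..xmax, x ^ 0 * ψ t x)
          + (-3)/xmin^2 * (∫ x in xmin..xmax, x ^ 2 * ψ t x) := by
      rw [hut t htm]
      field_simp
      ring
    rwa [e] at h
  · intro t htm
    have h := hd2 t htm
    have e : xmin ^ 2 * u t + 2 * (∫ x in xmin..xmax, x ^ 1 * ψ t x)
        = 2 * (∫ x in xmin..xmax, x ^ 1 * ψ t x)
          + (-3)/xmin * (∫ x in xmin..xmax, x ^ 2 * ψ t x) := by
      rw [hut t htm]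
      field_simp
      ring
    rwa [e] at h

/-- Observability of the nucleation boundary datum: for the unit-speed transport equation
`∂ₜψ + ∂ₓψ = 0` on `[t0,τ] × [xmin,xmax]` with `xmin > 0`, zero initial datum and
`ψ(t, xmax) = 0`, the third-moment output determines the boundary datum `u` uniquely. -/
theorem stmt9 (t0 τ xmin xmax : ℝ) (ht : t0 < τ) (hx0 : 0 < xmin) (hx : xmin < xmax)
    (ψ1 ψ2 : ℝ → ℝ → ℝ) (u1 u2 : ℝ → ℝ)
    (hC1 : ContDiffOn ℝ 4 (fun p : ℝ × ℝ => ψ1 p.1 p.2) (Set.Icc t0 τ ×ˢ Set.Icc xmin xmax))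
    (hC2 : ContDiffOn ℝ 4 (fun p : ℝ × ℝ => ψ2 p.1 p.2) (Set.Icc t0 τ ×ˢ Set.Icc xmin xmax))
    (hu1 : ContDiffOn ℝ 3 u1 (Set.Icc t0 τ))
    (hu2 : ContDiffOn ℝ 3 u2 (Set.Icc t0 τ))
    (hPDE1 : ∀ t ∈ Set.Icc t0 τ, ∀ x ∈ Set.Icc xmin xmax,
      derivWithin (fun s => ψ1 s x) (Set.Icc t0 τ) t
        + derivWithin (fun ξ => ψ1 t ξ) (Set.Icc xmin xmax) x = 0)
    (hPDE2 : ∀ t ∈ Set.Icc t0 τ, ∀ x ∈ Set.Icc xmin xmax,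
      derivWithin (fun s => ψ2 s x) (Set.Icc t0 τ) t
        + derivWithin (fun ξ => ψ2 t ξ) (Set.Icc xmin xmax) x = 0)
    (hinit1 : ∀ x ∈ Set.Icc xmin xmax, ψ1 t0 x = 0)
    (hinit2 : ∀ x ∈ Set.Icc xmin xmax, ψ2 t0 x = 0)
    (hbmin1 : ∀ t ∈ Set.Icc t0 τ, ψ1 t xmin = u1 t)
    (hbmin2 : ∀ t ∈ Set.Icc t0 τ, ψ2 t xmin = u2 t)
    (hbmax1 : ∀ t ∈ Set.Icc t0 τ, ψ1 t xmax = 0)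
    (hbmax2 : ∀ t ∈ Set.Icc t0 τ, ψ2 t xmax = 0)
    (hout : ∀ t ∈ Set.Icc t0 τ,
      (∫ x in xmin..xmax, x ^ 3 * ψ1 t x) = ∫ x in xmin..xmax, x ^ 3 * ψ2 t x) :
    ∀ t ∈ Set.Icc t0 τ, u1 t = u2 t := by
  have hUD : UniqueDiffOn ℝ (Set.Icc t0 τ) := uniqueDiffOn_Icc ht
  have hUDX : UniqueDiffOn ℝ (Set.Icc xmin xmax) := uniqueDiffOn_Icc hx
  -- the difference solution
  have key := aux_main (t0 := t0) (τ := τ) (xmin := xmin) (xmax := xmax) ht hx0 hx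
    (ψ := fun s x => ψ1 s x - ψ2 s x)
    (P := fun t x => derivWithin (fun s => ψ1 s x) (Set.Icc t0 τ) t
      - derivWithin (fun s => ψ2 s x) (Set.Icc t0 τ) t)
    (Q := fun t x => derivWithin (fun ξ => ψ1 t ξ) (Set.Icc xmin xmax) x
      - derivWithin (fun ξ => ψ2 t ξ) (Set.Icc xmin xmax) x)
    (u := fun s => u1 s - u2 s)
    ?_ ?_ ?_ ?_ ?_ ?_ ?_ ?_ ?_ ?_ ?_
  · intro t htm
    have := key t htm
    linarith [this]
  · exact (hC1.continuousOn).sub (hC2.continuousOn)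
  · apply ContinuousOn.congr ((aux_fderiv_cont ht hx hC1 ((1:ℝ),(0:ℝ))).sub
      (aux_fderiv_cont ht hx hC2 ((1:ℝ),(0:ℝ))))
    rintro ⟨t, x⟩ hp
    have htm : t ∈ Set.Icc t0 τ := hp.1
    have hxm : x ∈ Set.Icc xmin xmax := hp.2
    have e1 := (aux_slice_t hC1 htm hxm).derivWithin (hUD t htm)
    have e2 := (aux_slice_t hC2 htm hxm).derivWithin (hUD t htm)
    show derivWithin (fun s => ψ1 s x) (Set.Icc t0 τ) t
      - derivWithin (fun s => ψ2 s x) (Set.Icc t0 τ) t = _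
    rw [e1, e2]; rfl
  · apply ContinuousOn.congr ((aux_fderiv_cont ht hx hC1 ((0:ℝ),(1:ℝ))).sub
      (aux_fderiv_cont ht hx hC2 ((0:ℝ),(1:ℝ))))
    rintro ⟨t, x⟩ hp
    have htm : t ∈ Set.Icc t0 τ := hp.1
    have hxm : x ∈ Set.Icc xmin xmax := hp.2
    have e1 := (aux_slice_x hC1 htm hxm).derivWithin (hUDX x hxm)
    have e2 := (aux_slice_x hC2 htm hxm).derivWithin (hUDX x hxm)
    show derivWithin (fun ξ => ψ1 t ξ) (Set.Icc xmin xmax) x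
      - derivWithin (fun ξ => ψ2 t ξ) (Set.Icc xmin xmax) x = _
    rw [e1, e2]; rfl
  · intro x hxm t htm
    have h1 := aux_slice_t hC1 htm hxm
    have h2 := aux_slice_t hC2 htm hxm
    have e1 := h1.derivWithin (hUD t htm)
    have e2 := h2.derivWithin (hUD t htm)
    show HasDerivWithinAt (fun s => ψ1 s x - ψ2 s x)
      (derivWithin (fun s => ψ1 s x) (Set.Icc t0 τ) t
        - derivWithin (fun s => ψ2 s x) (Set.Icc t0 τ) t) (Set.Icc t0 τ) t
    rw [e1, e2]
    exact h1.sub h2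
  · intro t htm x hxm
    have h1 := aux_slice_x hC1 htm hxm
    have h2 := aux_slice_x hC2 htm hxm
    have e1 := h1.derivWithin (hUDX x hxm)
    have e2 := h2.derivWithin (hUDX x hxm)
    show HasDerivWithinAt (fun ξ => ψ1 t ξ - ψ2 t ξ)
      (derivWithin (fun ξ => ψ1 t ξ) (Set.Icc xmin xmax) x
        - derivWithin (fun ξ => ψ2 t ξ) (Set.Icc xmin xmax) x) (Set.Icc xmin xmax) x
    rw [e1, e2]
    exact h1.sub h2
  · intro t htm x hxm
    have a1 := hPDE1 t htm x hxm
    have a2 := hPDE2 t htm x hxm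
    show (derivWithin (fun s => ψ1 s x) (Set.Icc t0 τ) t
        - derivWithin (fun s => ψ2 s x) (Set.Icc t0 τ) t)
      + (derivWithin (fun ξ => ψ1 t ξ) (Set.Icc xmin xmax) x
        - derivWithin (fun ξ => ψ2 t ξ) (Set.Icc xmin xmax) x) = 0
    linarith
  · exact (hu1.continuousOn).sub (hu2.continuousOn)
  · intro x hxm
    show ψ1 t0 x - ψ2 t0 x = 0
    rw [hinit1 x hxm, hinit2 x hxm, sub_zero]
  · intro t htm
    show ψ1 t xmin - ψ2 t xmin = u1 t - u2 t
    rw [hbmin1 t htm, hbmin2 t htm]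
  · intro t htm
    show ψ1 t xmax - ψ2 t xmax = 0
    rw [hbmax1 t htm, hbmax2 t htm, sub_zero]
  · intro t htm
    have hs1 : ContinuousOn (fun x => x ^ 3 * ψ1 t x) (Set.Icc xmin xmax) := by
      have hmap : ContinuousOn (fun x : ℝ => ((t, x) : ℝ × ℝ)) (Set.Icc xmin xmax) :=
        (continuous_const.prodMk continuous_id).continuousOn
      exact (continuousOn_pow 3).mul
        (hC1.continuousOn.comp hmap (fun x hxm => Set.mk_mem_prod htm hxm))
    have hs2 : ContinuousOn (fun x => x ^ 3 * ψ2 t x) (Set.Icc xmin xmax) := by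
      have hmap : ContinuousOn (fun x : ℝ => ((t, x) : ℝ × ℝ)) (Set.Icc xmin xmax) :=
        (continuous_const.prodMk continuous_id).continuousOn
      exact (continuousOn_pow 3).mul
        (hC2.continuousOn.comp hmap (fun x hxm => Set.mk_mem_prod htm hxm))
    have he : (∫ x in xmin..xmax, x ^ 3 * (ψ1 t x - ψ2 t x))
        = (∫ x in xmin..xmax, (x ^ 3 * ψ1 t x - x ^ 3 * ψ2 t x)) := by
      apply integral_congr
      intro x _
      show x ^ 3 * (ψ1 t x - ψ2 t x) = x ^ 3 * ψ1 t x - x ^ 3 * ψ2 t x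
      ring
    show (∫ x in xmin..xmax, x ^ 3 * (ψ1 t x - ψ2 t x)) = 0
    rw [he, integral_sub (hs1.intervalIntegrable_of_Icc hx.le)
      (hs2.intervalIntegrable_of_Icc hx.le), hout t htm, sub_self]
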